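/- Let n ≥ 1 and let a, b, c, d, e, f ∈ {1,…,n} be pairwise distinct. Then, as words over 𝒢_n, H_{c,e} H_{d,f} H_{e,f} H_{d,f} H_{c,e} H_{a,c} H_{b,d} H_{a,b} H_{b,d} H_{a,c} H_{a,e} H_{b,f} H_{a,b} H_{b,f} H_{a,e} ≈ H_{a,c} H_{b,d} H_{a,b} H_{b,d} H_{a,c}. -/
import Mathlib


open Matrix

noncomputable section

/-- `Z_a`: identity matrix except entry `(a,a)` is `-1`. -/
def Zmat (n : ℕ) (a : Fin n) : Matrix (Fin n) (Fin n) ℝ :=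
  fun i j => if i = j then (if i = a then -1 else 1) else 0

/-- `X_{b,c}`: the permutation matrix exchanging the `b`-th and `c`-th
standard basis vectors. -/
def Xmat (n : ℕ) (b c : Fin n) : Matrix (Fin n) (Fin n) ℝ :=
  fun i j => if j = Equiv.swap b c i then 1 else 0

/-- `H_{b,c}`: identity except entries `(b,b), (b,c), (c,b)` equal `1/√2`
and entry `(c,c)` equals `-1/√2`. -/
def Hmat (n : ℕ) (b c : Fin n) : Matrix (Fin n) (Fin n) ℝ :=
  fun i j =>
    if i = b ∧ j = b then 1 / Real.sqrt 2
    else if i = b ∧ j = c then 1 / Real.sqrt 2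
    else if i = c ∧ j = b then 1 / Real.sqrt 2
    else if i = c ∧ j = c then -(1 / Real.sqrt 2)
    else if i = j then 1 else 0

/-- Generators of `𝒢_n`. -/
inductive Gen (n : ℕ) : Type
  | Z : Fin n → Gen n
  | X : (b c : Fin n) → b ≠ c → Gen n
  | H : (b c : Fin n) → b ≠ c → Gen n

/-- Semantics of a generator. -/
def gsem {n : ℕ} : Gen n → Matrix (Fin n) (Fin n) ℝ
  | Gen.Z a => Zmat n a
  | Gen.X b c _ => Xmat n b c
  | Gen.H b c _ => Hmat n b c

/-- Semantics of a word (rightmost generator acts first). -/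
def wsem {n : ℕ} : List (Gen n) → Matrix (Fin n) (Fin n) ℝ
  | [] => 1
  | g :: w => gsem g * wsem w

/-- The smallest congruence `≈` on words over `𝒢_n` containing the relations
(a1)-(d4), (e1), (e2) of the paper. -/
inductive WRel (n : ℕ) : List (Gen n) → List (Gen n) → Prop
  | rel_zz (a : Fin n) : WRel n [Gen.Z a, Gen.Z a] []
  | rel_xx (a b : Fin n) (hab : a ≠ b) : WRel n [Gen.X a b hab, Gen.X a b hab] []
  | rel_hh (a b : Fin n) (hab : a ≠ b) : WRel n [Gen.H a b hab, Gen.H a b hab] []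
  | rel_zz_comm (a b : Fin n) (hab : a ≠ b) : WRel n [Gen.Z a, Gen.Z b] [Gen.Z b, Gen.Z a]
  | rel_zx_comm (a b c : Fin n) (hab : a ≠ b) (hac : a ≠ c) (hbc : b ≠ c) :
      WRel n [Gen.Z a, Gen.X b c hbc] [Gen.X b c hbc, Gen.Z a]
  | rel_xx_comm (a b c d : Fin n) (hab : a ≠ b) (hac : a ≠ c) (had : a ≠ d)
      (hbc : b ≠ c) (hbd : b ≠ d) (hcd : c ≠ d) :
      WRel n [Gen.X a b hab, Gen.X c d hcd] [Gen.X c d hcd, Gen.X a b hab]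
  | rel_zh_comm (a b c : Fin n) (hab : a ≠ b) (hac : a ≠ c) (hbc : b ≠ c) :
      WRel n [Gen.Z a, Gen.H b c hbc] [Gen.H b c hbc, Gen.Z a]
  | rel_xh_comm (a b c d : Fin n) (hab : a ≠ b) (hac : a ≠ c) (had : a ≠ d)
      (hbc : b ≠ c) (hbd : b ≠ d) (hcd : c ≠ d) :
      WRel n [Gen.X a b hab, Gen.H c d hcd] [Gen.H c d hcd, Gen.X a b hab]
  | rel_hh_comm (a b c d : Fin n) (hab : a ≠ b) (hac : a ≠ c) (had : a ≠ d)
      (hbc : b ≠ c) (hbd : b ≠ d) (hcd : c ≠ d) :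
      WRel n [Gen.H a b hab, Gen.H c d hcd] [Gen.H c d hcd, Gen.H a b hab]
  | rel_zx (a b : Fin n) (hab : a ≠ b) :
      WRel n [Gen.Z a, Gen.X a b hab] [Gen.X a b hab, Gen.Z b]
  | rel_xc2 (a b c : Fin n) (hab : a ≠ b) (hac : a ≠ c) (hbc : b ≠ c) :
      WRel n [Gen.X b c hbc, Gen.X a b hab] [Gen.X a b hab, Gen.X a c hac]
  | rel_xc3 (a b c : Fin n) (hab : a ≠ b) (hac : a ≠ c) (hbc : b ≠ c) :
      WRel n [Gen.X a c hac, Gen.X b c hbc] [Gen.X b c hbc, Gen.X a b hab]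
  | rel_hx4 (a b c : Fin n) (hab : a ≠ b) (hac : a ≠ c) (hbc : b ≠ c) :
      WRel n [Gen.H b c hbc, Gen.X a b hab] [Gen.X a b hab, Gen.H a c hac]
  | rel_hx5 (a b c : Fin n) (hab : a ≠ b) (hac : a ≠ c) (hbc : b ≠ c) :
      WRel n [Gen.H a c hac, Gen.X b c hbc] [Gen.X b c hbc, Gen.H a b hab]
  | rel_zzh (a b : Fin n) (hab : a ≠ b) :
      WRel n [Gen.Z a, Gen.Z b, Gen.H a b hab] [Gen.H a b hab, Gen.Z a, Gen.Z b]
  | rel_zh (a b : Fin n) (hab : a ≠ b) :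
      WRel n [Gen.Z b, Gen.H a b hab] [Gen.H a b hab, Gen.X a b hab]
  | rel_d3 (a b c d : Fin n) (hab : a ≠ b) (hac : a ≠ c) (had : a ≠ d)
      (hbc : b ≠ c) (hbd : b ≠ d) (hcd : c ≠ d) :
      WRel n
        ([Gen.H c d hcd, Gen.H a c hac, Gen.H b d hbd] ++
         [Gen.H c d hcd, Gen.H a c hac, Gen.H b d hbd] ++
         [Gen.H c d hcd, Gen.H a c hac, Gen.H b d hbd] ++
         [Gen.H c d hcd, Gen.H a c hac, Gen.H b d hbd])
        [Gen.H a b hab, Gen.H c d hcd]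
  | rel_d4 (a b c d e f : Fin n) (hab : a ≠ b) (hac : a ≠ c) (had : a ≠ d)
      (hae : a ≠ e) (haf : a ≠ f) (hbc : b ≠ c) (hbd : b ≠ d) (hbe : b ≠ e)
      (hbf : b ≠ f) (hcd : c ≠ d) (hce : c ≠ e) (hcf : c ≠ f) (hde : d ≠ e)
      (hdf : d ≠ f) (hef : e ≠ f) :
      WRel n
        ([Gen.H a c hac, Gen.H b d hbd, Gen.H a b hab, Gen.H a c hac,
          Gen.H b d hbd, Gen.X c e hce, Gen.X d f hdf] ++
         [Gen.H a c hac, Gen.H b d hbd, Gen.H a b hab, Gen.H a c hac,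
          Gen.H b d hbd, Gen.X c e hce, Gen.X d f hdf] ++
         [Gen.H a c hac, Gen.H b d hbd, Gen.H a b hab, Gen.H a c hac,
          Gen.H b d hbd, Gen.X c e hce, Gen.X d f hdf])
        [Gen.H c e hce, Gen.H d f hdf, Gen.H e f hef, Gen.H c e hce,
         Gen.H d f hdf, Gen.X c e hce, Gen.X d f hdf]
  | rel_x_swap (b c : Fin n) (hbc : b ≠ c) :
      WRel n [Gen.X c b (Ne.symm hbc)] [Gen.X b c hbc]
  | rel_h_swap (b c : Fin n) (hbc : b ≠ c) :
      WRel n [Gen.H c b (Ne.symm hbc)] [Gen.X b c hbc, Gen.H b c hbc, Gen.X b c hbc]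
  | refl (w : List (Gen n)) : WRel n w w
  | symm {u v : List (Gen n)} : WRel n u v → WRel n v u
  | trans {u v w : List (Gen n)} : WRel n u v → WRel n v w → WRel n u w
  | append_left (w : List (Gen n)) {u v : List (Gen n)} :
      WRel n u v → WRel n (w ++ u) (w ++ v)
  | append_right (w : List (Gen n)) {u v : List (Gen n)} :
      WRel n u v → WRel n (u ++ w) (v ++ w)

/-- Membership in the ring `ℤ[√2] ⊆ ℝ`. -/
def inZsqrt2 (x : ℝ) : Prop := ∃ a b : ℤ, x = (a : ℝ) + (b : ℝ) * Real.sqrt 2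

/-- Membership in the ring `ℤ[1/√2] ⊆ ℝ`. -/
def inZinvsqrt2 (x : ℝ) : Prop := ∃ k : ℕ, inZsqrt2 (Real.sqrt 2 ^ k * x)

/-- `u ≡ v (mod 2)`, i.e. `(u - v)/2 ∈ ℤ[√2]`. -/
def cong2 (u v : ℝ) : Prop := inZsqrt2 ((u - v) / 2)

/-- Least denominator exponent of a scalar. -/
def lde (x : ℝ) : ℕ := sInf {k : ℕ | inZsqrt2 (Real.sqrt 2 ^ k * x)}

/-- Least denominator exponent of a vector. -/
def ldeVec {m : ℕ} (v : Fin m → ℝ) : ℕ :=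
  sInf {k : ℕ | ∀ i, inZsqrt2 (Real.sqrt 2 ^ k * v i)}

/-- The largest (1-based) index `j` such that the `j`-th column of `M` differs
from the `j`-th standard basis vector (`0` if `M` is the identity). -/
def levelJ {n : ℕ} (M : Matrix (Fin n) (Fin n) ℝ) : ℕ :=
  sSup {m : ℕ | ∃ i : Fin n, m = (i : ℕ) + 1 ∧
    ∃ r : Fin n, M r i ≠ (if r = i then (1 : ℝ) else 0)}

/-- The `levelJ M`-th column of `M` (junk if `n = 0`). -/
def levelCol {n : ℕ} (M : Matrix (Fin n) (Fin n) ℝ) : Fin n → ℝ :=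
  fun r => if h : levelJ M - 1 < n then M r ⟨levelJ M - 1, h⟩ else 0

/-- The level `(j, k, l)` of a matrix, as an element of `ℕ ×ₗ (ℕ ×ₗ ℕ)`
(lexicographic order). -/
def level {n : ℕ} (M : Matrix (Fin n) (Fin n) ℝ) : ℕ ×ₗ (ℕ ×ₗ ℕ) :=
  if levelJ M = 0 then toLex (0, toLex (0, 0))
  else if ldeVec (levelCol M) = 0 then toLex (levelJ M, toLex (0, 0))
  else
    toLex (levelJ M, toLex (ldeVec (levelCol M),
      Nat.card {i : Fin n //
        cong2 (Real.sqrt 2 ^ ldeVec (levelCol M) * levelCol M i) 1 ∨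
        cong2 (Real.sqrt 2 ^ ldeVec (levelCol M) * levelCol M i) (1 + Real.sqrt 2)}))

/-- The level of the sequence of intermediate states obtained by applying the
generators of a word (rightmost first) to a state `s`: the maximum of the
levels of all intermediate states. -/
def seqLevel {n : ℕ} : List (Gen n) → Matrix (Fin n) (Fin n) ℝ → ℕ ×ₗ (ℕ ×ₗ ℕ)
  | [], s => level s
  | g :: w, s => max (level (gsem g * (wsem w * s))) (seqLevel w s)

/-- The basic generators `𝒢'_n = {X_{1,x} : 2 ≤ x ≤ n} ∪ {Z_1, H_{1,2}}`
(written with 1-based indices). -/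
def Gen.isBasic {n : ℕ} : Gen n → Prop
  | Gen.Z a => (a : ℕ) = 0
  | Gen.X b _ _ => (b : ℕ) = 0
  | Gen.H b c _ => (b : ℕ) = 0 ∧ (c : ℕ) = 1

/-- A generator with ordered indices (`b < c` for `X_{b,c}` and `H_{b,c}`). -/
def Gen.ordered {n : ℕ} : Gen n → Prop
  | Gen.Z _ => True
  | Gen.X b c _ => b < c
  | Gen.H b c _ => b < c


private lemma wctx {n : ℕ} (p s : List (Gen n)) {u v : List (Gen n)} (h : WRel n u v) :
    WRel n (p ++ (u ++ s)) (p ++ (v ++ s)) :=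
  WRel.append_left p (WRel.append_right s h)

private lemma comm_hx {n : ℕ} {p q r s : Fin n} (hpq : p ≠ q) (hrs : r ≠ s)
    (hrp : r ≠ p) (hrq : r ≠ q) (hsp : s ≠ p) (hsq : s ≠ q) :
    WRel n [Gen.H p q hpq, Gen.X r s hrs] [Gen.X r s hrs, Gen.H p q hpq] :=
  (WRel.rel_xh_comm r s p q hrs hrp hrq hsp hsq hpq).symm

private lemma conj_hx {n : ℕ} {p q r : Fin n} (hpq : p ≠ q) (hpr : p ≠ r) (hqr : q ≠ r) :
    WRel n [Gen.H p q hpq, Gen.X q r hqr] [Gen.X q r hqr, Gen.H p r hpr] := by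
  have hsw : WRel n [Gen.X r q hqr.symm] [Gen.X q r hqr] := WRel.rel_x_swap q r hqr
  have h5 : WRel n [Gen.H p q hpq, Gen.X r q hqr.symm] [Gen.X r q hqr.symm, Gen.H p r hpr] :=
    WRel.rel_hx5 p r q hpr hpq hqr.symm
  exact WRel.trans (wctx [Gen.H p q hpq] [] hsw.symm)
    (WRel.trans h5 (wctx [] [Gen.H p r hpr] hsw))


theorem prop_h6 (n : ℕ) (hn : 1 ≤ n) (a b c d e f : Fin n)
    (hab : a ≠ b) (hac : a ≠ c) (had : a ≠ d) (hae : a ≠ e) (haf : a ≠ f)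
    (hbc : b ≠ c) (hbd : b ≠ d) (hbe : b ≠ e) (hbf : b ≠ f)
    (hcd : c ≠ d) (hce : c ≠ e) (hcf : c ≠ f)
    (hde : d ≠ e) (hdf : d ≠ f) (hef : e ≠ f) :
    WRel n
      [Gen.H c e hce, Gen.H d f hdf, Gen.H e f hef, Gen.H d f hdf, Gen.H c e hce, Gen.H a c hac, Gen.H b d hbd, Gen.H a b hab, Gen.H b d hbd, Gen.H a c hac, Gen.H a e hae, Gen.H b f hbf, Gen.H a b hab, Gen.H b f hbf, Gen.H a e hae]
      [Gen.H a c hac, Gen.H b d hbd, Gen.H a b hab, Gen.H b d hbd, Gen.H a c hac] := by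
  have S1_0 : WRel n [Gen.X c e hce, Gen.X d f hdf, Gen.H a c hac, Gen.H b d hbd, Gen.H a b hab, Gen.H a c hac, Gen.H b d hbd, Gen.X c e hce, Gen.X d f hdf] [Gen.X c e hce, Gen.X d f hdf, Gen.H a c hac, Gen.H b d hbd, Gen.H a b hab, Gen.H a c hac, Gen.X c e hce, Gen.H b d hbd, Gen.X d f hdf] := wctx [Gen.X c e hce, Gen.X d f hdf, Gen.H a c hac, Gen.H b d hbd, Gen.H a b hab, Gen.H a c hac] [Gen.X d f hdf] (comm_hx hbd hce hbc.symm hcd hbe.symm hde.symm)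
  have S1_1 : WRel n [Gen.X c e hce, Gen.X d f hdf, Gen.H a c hac, Gen.H b d hbd, Gen.H a b hab, Gen.H a c hac, Gen.X c e hce, Gen.H b d hbd, Gen.X d f hdf] [Gen.X c e hce, Gen.X d f hdf, Gen.H a c hac, Gen.H b d hbd, Gen.H a b hab, Gen.X c e hce, Gen.H a e hae, Gen.H b d hbd, Gen.X d f hdf] := wctx [Gen.X c e hce, Gen.X d f hdf, Gen.H a c hac, Gen.H b d hbd, Gen.H a b hab] [Gen.H b d hbd, Gen.X d f hdf] (conj_hx hac hae hce)
  have S1_2 : WRel n [Gen.X c e hce, Gen.X d f hdf, Gen.H a c hac, Gen.H b d hbd, Gen.H a b hab, Gen.X c e hce, Gen.H a e hae, Gen.H b d hbd, Gen.X d f hdf] [Gen.X c e hce, Gen.X d f hdf, Gen.H a c hac, Gen.H b d hbd, Gen.X c e hce, Gen.H a b hab, Gen.H a e hae, Gen.H b d hbd, Gen.X d f hdf] := wctx [Gen.X c e hce, Gen.X d f hdf, Gen.H a c hac, Gen.H b d hbd] [Gen.H a e hae, Gen.H b d hbd, Gen.X d f hdf] (comm_hx hab hce hac.symm hbc.symm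 hae.symm hbe.symm)
  have S1_3 : WRel n [Gen.X c e hce, Gen.X d f hdf, Gen.H a c hac, Gen.H b d hbd, Gen.X c e hce, Gen.H a b hab, Gen.H a e hae, Gen.H b d hbd, Gen.X d f hdf] [Gen.X c e hce, Gen.X d f hdf, Gen.H a c hac, Gen.X c e hce, Gen.H b d hbd, Gen.H a b hab, Gen.H a e hae, Gen.H b d hbd, Gen.X d f hdf] := wctx [Gen.X c e hce, Gen.X d f hdf, Gen.H a c hac] [Gen.H a b hab, Gen.H a e hae, Gen.H b d hbd, Gen.X d f hdf] (comm_hx hbd hce hbc.symm hcd hbe.symm hde.symm)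
  have S1_4 : WRel n [Gen.X c e hce, Gen.X d f hdf, Gen.H a c hac, Gen.X c e hce, Gen.H b d hbd, Gen.H a b hab, Gen.H a e hae, Gen.H b d hbd, Gen.X d f hdf] [Gen.X c e hce, Gen.X d f hdf, Gen.X c e hce, Gen.H a e hae, Gen.H b d hbd, Gen.H a b hab, Gen.H a e hae, Gen.H b d hbd, Gen.X d f hdf] := wctx [Gen.X c e hce, Gen.X d f hdf] [Gen.H b d hbd, Gen.H a b hab, Gen.H a e hae, Gen.H b d hbd, Gen.X d f hdf] (conj_hx hac hae hce)
  have S1_5 : WRel n [Gen.X c e hce, Gen.X d f hdf, Gen.X c e hce, Gen.H a e hae, Gen.H b d hbd, Gen.H a b hab, Gen.H a e hae, Gen.H b d hbd, Gen.X d f hdf] [Gen.X c e hce, Gen.X c e hce, Gen.X d f hdf, Gen.H a e hae, Gen.H b d hbd, Gen.H a b hab, Gen.H a e hae, Gen.H b d hbd, Gen.X d f hdf] := wctx [Gen.X c e hce] [Gen.H a e hae, Gen.H b d hbd, Gen.H a b hab, Gen.H a e hae, Gen.H b d hbd, Gen.X d f hdf] (WRel.rel_xx_comm d f c e hdf hcd.symm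 hde hcf.symm hef.symm hce)
  have S1_6 : WRel n [Gen.X c e hce, Gen.X c e hce, Gen.X d f hdf, Gen.H a e hae, Gen.H b d hbd, Gen.H a b hab, Gen.H a e hae, Gen.H b d hbd, Gen.X d f hdf] [Gen.X d f hdf, Gen.H a e hae, Gen.H b d hbd, Gen.H a b hab, Gen.H a e hae, Gen.H b d hbd, Gen.X d f hdf] := wctx [] [Gen.X d f hdf, Gen.H a e hae, Gen.H b d hbd, Gen.H a b hab, Gen.H a e hae, Gen.H b d hbd, Gen.X d f hdf] (WRel.rel_xx c e hce)
  have S1_7 : WRel n [Gen.X d f hdf, Gen.H a e hae, Gen.H b d hbd, Gen.H a b hab, Gen.H a e hae, Gen.H b d hbd, Gen.X d f hdf] [Gen.X d f hdf, Gen.H a e hae, Gen.H b d hbd, Gen.H a b hab, Gen.H a e hae, Gen.X d f hdf, Gen.H b f hbf] := wctx [Gen.X d f hdf, Gen.H a e hae, Gen.H b d hbd, Gen.H a b hab, Gen.H a e hae] [] (conj_hx hbd hbf hdf)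
  have S1_8 : WRel n [Gen.X d f hdf, Gen.H a e hae, Gen.H b d hbd, Gen.H a b hab, Gen.H a e hae, Gen.X d f hdf, Gen.H b f hbf] [Gen.X d f hdf, Gen.H a e hae, Gen.H b d hbd, Gen.H a b hab, Gen.X d f hdf, Gen.H a e hae, Gen.H b f hbf] := wctx [Gen.X d f hdf, Gen.H a e hae, Gen.H b d hbd, Gen.H a b hab] [Gen.H b f hbf] (comm_hx hae hdf had.symm hde haf.symm hef.symm)
  have S1_9 : WRel n [Gen.X d f hdf, Gen.H a e hae, Gen.H b d hbd, Gen.H a b hab, Gen.X d f hdf, Gen.H a e hae, Gen.H b f hbf] [Gen.X d f hdf, Gen.H a e hae, Gen.H b d hbd, Gen.X d f hdf, Gen.H a b hab, Gen.H a e hae, Gen.H b f hbf] := wctx [Gen.X d f hdf, Gen.H a e hae, Gen.H b d hbd] [Gen.H a e hae, Gen.H b f hbf] (comm_hx hab hdf had.symm hbd.symm haf.symm hbf.symm)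
  have S1_10 : WRel n [Gen.X d f hdf, Gen.H a e hae, Gen.H b d hbd, Gen.X d f hdf, Gen.H a b hab, Gen.H a e hae, Gen.H b f hbf] [Gen.X d f hdf, Gen.H a e hae, Gen.X d f hdf, Gen.H b f hbf, Gen.H a b hab, Gen.H a e hae, Gen.H b f hbf] := wctx [Gen.X d f hdf, Gen.H a e hae] [Gen.H a b hab, Gen.H a e hae, Gen.H b f hbf] (conj_hx hbd hbf hdf)
  have S1_11 : WRel n [Gen.X d f hdf, Gen.H a e hae, Gen.X d f hdf, Gen.H b f hbf, Gen.H a b hab, Gen.H a e hae, Gen.H b f hbf] [Gen.X d f hdf, Gen.X d f hdf, Gen.H a e hae, Gen.H b f hbf, Gen.H a b hab, Gen.H a e hae, Gen.H b f hbf] := wctx [Gen.X d f hdf] [Gen.H b f hbf, Gen.H a b hab, Gen.H a e hae, Gen.H b f hbf] (comm_hx hae hdf had.symm hde haf.symm hef.symm)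
  have S1_12 : WRel n [Gen.X d f hdf, Gen.X d f hdf, Gen.H a e hae, Gen.H b f hbf, Gen.H a b hab, Gen.H a e hae, Gen.H b f hbf] [Gen.H a e hae, Gen.H b f hbf, Gen.H a b hab, Gen.H a e hae, Gen.H b f hbf] := wctx [] [Gen.H a e hae, Gen.H b f hbf, Gen.H a b hab, Gen.H a e hae, Gen.H b f hbf] (WRel.rel_xx d f hdf)
  have S1 : WRel n [Gen.X c e hce, Gen.X d f hdf, Gen.H a c hac, Gen.H b d hbd, Gen.H a b hab, Gen.H a c hac, Gen.H b d hbd, Gen.X c e hce, Gen.X d f hdf] [Gen.H a e hae, Gen.H b f hbf, Gen.H a b hab, Gen.H a e hae, Gen.H b f hbf] := (S1_0.trans (S1_1.trans (S1_2.trans (S1_3.trans (S1_4.trans (S1_5.trans (S1_6.trans (S1_7.trans (S1_8.trans (S1_9.trans (S1_10.trans (S1_11.trans S1_12))))))))))))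
  have S4_0 : WRel n [Gen.X c e hce, Gen.X d f hdf, Gen.X c e hce, Gen.X d f hdf] [Gen.X c e hce, Gen.X c e hce, Gen.X d f hdf, Gen.X d f hdf] := wctx [Gen.X c e hce] [Gen.X d f hdf] (WRel.rel_xx_comm d f c e hdf hcd.symm hde hcf.symm hef.symm hce)
  have S4_1 : WRel n [Gen.X c e hce, Gen.X c e hce, Gen.X d f hdf, Gen.X d f hdf] [Gen.X d f hdf, Gen.X d f hdf] := wctx [] [Gen.X d f hdf, Gen.X d f hdf] (WRel.rel_xx c e hce)
  have S4_2 : WRel n [Gen.X d f hdf, Gen.X d f hdf] [] := wctx [] [] (WRel.rel_xx d f hdf)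
  have S4 : WRel n [Gen.X c e hce, Gen.X d f hdf, Gen.X c e hce, Gen.X d f hdf] [] := (S4_0.trans (S4_1.trans S4_2))
  have S2_0 : WRel n [Gen.H a c hac, Gen.H b d hbd, Gen.H a b hab, Gen.H a c hac, Gen.H b d hbd, Gen.H a c hac, Gen.H b d hbd, Gen.H a b hab, Gen.H a c hac, Gen.H b d hbd] [Gen.H a c hac, Gen.H b d hbd, Gen.H a b hab, Gen.H a c hac, Gen.H a c hac, Gen.H b d hbd, Gen.H b d hbd, Gen.H a b hab, Gen.H a c hac, Gen.H b d hbd] := wctx [Gen.H a c hac, Gen.H b d hbd, Gen.H a b hab, Gen.H a c hac] [Gen.H b d hbd, Gen.H a b hab, Gen.H a c hac, Gen.H b d hbd] (WRel.rel_hh_comm b d a c hbd hab.symm hbc had.symm hcd.symm hac)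
  have S2_1 : WRel n [Gen.H a c hac, Gen.H b d hbd, Gen.H a b hab, Gen.H a c hac, Gen.H a c hac, Gen.H b d hbd, Gen.H b d hbd, Gen.H a b hab, Gen.H a c hac, Gen.H b d hbd] [Gen.H a c hac, Gen.H b d hbd, Gen.H a b hab, Gen.H b d hbd, Gen.H b d hbd, Gen.H a b hab, Gen.H a c hac, Gen.H b d hbd] := wctx [Gen.H a c hac, Gen.H b d hbd, Gen.H a b hab] [Gen.H b d hbd, Gen.H b d hbd, Gen.H a b hab, Gen.H a c hac, Gen.H b d hbd] (WRel.rel_hh a c hac)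
  have S2_2 : WRel n [Gen.H a c hac, Gen.H b d hbd, Gen.H a b hab, Gen.H b d hbd, Gen.H b d hbd, Gen.H a b hab, Gen.H a c hac, Gen.H b d hbd] [Gen.H a c hac, Gen.H b d hbd, Gen.H a b hab, Gen.H a b hab, Gen.H a c hac, Gen.H b d hbd] := wctx [Gen.H a c hac, Gen.H b d hbd, Gen.H a b hab] [Gen.H a b hab, Gen.H a c hac, Gen.H b d hbd] (WRel.rel_hh b d hbd)
  have S2_3 : WRel n [Gen.H a c hac, Gen.H b d hbd, Gen.H a b hab, Gen.H a b hab, Gen.H a c hac, Gen.H b d hbd] [Gen.H a c hac, Gen.H b d hbd, Gen.H a c hac, Gen.H b d hbd] := wctx [Gen.H a c hac, Gen.H b d hbd] [Gen.H a c hac, Gen.H b d hbd] (WRel.rel_hh a b hab)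
  have S2_4 : WRel n [Gen.H a c hac, Gen.H b d hbd, Gen.H a c hac, Gen.H b d hbd] [Gen.H a c hac, Gen.H a c hac, Gen.H b d hbd, Gen.H b d hbd] := wctx [Gen.H a c hac] [Gen.H b d hbd] (WRel.rel_hh_comm b d a c hbd hab.symm hbc had.symm hcd.symm hac)
  have S2_5 : WRel n [Gen.H a c hac, Gen.H a c hac, Gen.H b d hbd, Gen.H b d hbd] [Gen.H b d hbd, Gen.H b d hbd] := wctx [] [Gen.H b d hbd, Gen.H b d hbd] (WRel.rel_hh a c hac)
  have S2_6 : WRel n [Gen.H b d hbd, Gen.H b d hbd] [] := wctx [] [] (WRel.rel_hh b d hbd)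
  have S2 : WRel n [Gen.H a c hac, Gen.H b d hbd, Gen.H a b hab, Gen.H a c hac, Gen.H b d hbd, Gen.H a c hac, Gen.H b d hbd, Gen.H a b hab, Gen.H a c hac, Gen.H b d hbd] [] := (S2_0.trans (S2_1.trans (S2_2.trans (S2_3.trans (S2_4.trans (S2_5.trans S2_6))))))
  have S3_0 : WRel n [Gen.H a e hae, Gen.H b f hbf, Gen.H a b hab, Gen.H a e hae, Gen.H b f hbf, Gen.H a e hae, Gen.H b f hbf, Gen.H a b hab, Gen.H a e hae, Gen.H b f hbf] [Gen.H a e hae, Gen.H b f hbf, Gen.H a b hab, Gen.H a e hae, Gen.H a e hae, Gen.H b f hbf, Gen.H b f hbf, Gen.H a b hab, Gen.H a e hae, Gen.H b f hbf] := wctx [Gen.H a e hae, Gen.H b f hbf, Gen.H a b hab, Gen.H a e hae] [Gen.H b f hbf, Gen.H a b hab, Gen.H a e hae, Gen.H b f hbf] (WRel.rel_hh_comm b f a e hbf hab.symm hbe haf.symm hef.symm hae)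
  have S3_1 : WRel n [Gen.H a e hae, Gen.H b f hbf, Gen.H a b hab, Gen.H a e hae, Gen.H a e hae, Gen.H b f hbf, Gen.H b f hbf, Gen.H a b hab, Gen.H a e hae, Gen.H b f hbf] [Gen.H a e hae, Gen.H b f hbf, Gen.H a b hab, Gen.H b f hbf, Gen.H b f hbf, Gen.H a b hab, Gen.H a e hae, Gen.H b f hbf] := wctx [Gen.H a e hae, Gen.H b f hbf, Gen.H a b hab] [Gen.H b f hbf, Gen.H b f hbf, Gen.H a b hab, Gen.H a e hae, Gen.H b f hbf] (WRel.rel_hh a e hae)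
  have S3_2 : WRel n [Gen.H a e hae, Gen.H b f hbf, Gen.H a b hab, Gen.H b f hbf, Gen.H b f hbf, Gen.H a b hab, Gen.H a e hae, Gen.H b f hbf] [Gen.H a e hae, Gen.H b f hbf, Gen.H a b hab, Gen.H a b hab, Gen.H a e hae, Gen.H b f hbf] := wctx [Gen.H a e hae, Gen.H b f hbf, Gen.H a b hab] [Gen.H a b hab, Gen.H a e hae, Gen.H b f hbf] (WRel.rel_hh b f hbf)
  have S3_3 : WRel n [Gen.H a e hae, Gen.H b f hbf, Gen.H a b hab, Gen.H a b hab, Gen.H a e hae, Gen.H b f hbf] [Gen.H a e hae, Gen.H b f hbf, Gen.H a e hae, Gen.H b f hbf] := wctx [Gen.H a e hae, Gen.H b f hbf] [Gen.H a e hae, Gen.H b f hbf] (WRel.rel_hh a b hab)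
  have S3_4 : WRel n [Gen.H a e hae, Gen.H b f hbf, Gen.H a e hae, Gen.H b f hbf] [Gen.H a e hae, Gen.H a e hae, Gen.H b f hbf, Gen.H b f hbf] := wctx [Gen.H a e hae] [Gen.H b f hbf] (WRel.rel_hh_comm b f a e hbf hab.symm hbe haf.symm hef.symm hae)
  have S3_5 : WRel n [Gen.H a e hae, Gen.H a e hae, Gen.H b f hbf, Gen.H b f hbf] [Gen.H b f hbf, Gen.H b f hbf] := wctx [] [Gen.H b f hbf, Gen.H b f hbf] (WRel.rel_hh a e hae)
  have S3_6 : WRel n [Gen.H b f hbf, Gen.H b f hbf] [] := wctx [] [] (WRel.rel_hh b f hbf)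
  have S3 : WRel n [Gen.H a e hae, Gen.H b f hbf, Gen.H a b hab, Gen.H a e hae, Gen.H b f hbf, Gen.H a e hae, Gen.H b f hbf, Gen.H a b hab, Gen.H a e hae, Gen.H b f hbf] [] := (S3_0.trans (S3_1.trans (S3_2.trans (S3_3.trans (S3_4.trans (S3_5.trans S3_6))))))
  have d4 : WRel n [Gen.H a c hac, Gen.H b d hbd, Gen.H a b hab, Gen.H a c hac, Gen.H b d hbd, Gen.X c e hce, Gen.X d f hdf, Gen.H a c hac, Gen.H b d hbd, Gen.H a b hab, Gen.H a c hac, Gen.H b d hbd, Gen.X c e hce, Gen.X d f hdf, Gen.H a c hac, Gen.H b d hbd, Gen.H a b hab, Gen.H a c hac, Gen.H b d hbd, Gen.X c e hce, Gen.X d f hdf] [Gen.H c e hce, Gen.H d f hdf, Gen.H e f hef, Gen.H c e hce, Gen.H d f hdf, Gen.X c e hce, Gen.X d f hdf] :=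
    WRel.rel_d4 a b c d e f hab hac had hae haf hbc hbd hbe hbf hcd hce hcf hde hdf hef
  have s5a : WRel n [Gen.H a c hac, Gen.H b d hbd, Gen.H a b hab, Gen.H a c hac, Gen.H b d hbd, Gen.X c e hce, Gen.X d f hdf, Gen.H a c hac, Gen.H b d hbd, Gen.H a b hab, Gen.H a c hac, Gen.H b d hbd, Gen.X c e hce, Gen.X d f hdf, Gen.H a c hac, Gen.H b d hbd, Gen.H a b hab, Gen.H a c hac, Gen.H b d hbd, Gen.X c e hce, Gen.X d f hdf] [Gen.H a c hac, Gen.H b d hbd, Gen.H a b hab, Gen.H a c hac, Gen.H b d hbd, Gen.H a e hae, Gen.H b f hbf, Gen.H a b hab, Gen.H a e hae, Gen.H b f hbf, Gen.H a c hac, Gen.H b d hbd, Gen.H a b hab, Gen.H a c hac, Gen.H b d hbd, Gen.X c e hce, Gen.X d f hdf] := wctx [Gen.H a c hac, Gen.H b d hbd, Gen.H a b hab, Gen.H a c hac, Gen.H b d hbd] [Gen.H a c hac, Gen.H b d hbd, Gen.H a b hab, Gen.H a c hac, Gen.H b d hbd, Gen.X c e hce, Gen.X d f hdf] S1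
  have S5 : WRel n [Gen.H a c hac, Gen.H b d hbd, Gen.H a b hab, Gen.H a c hac, Gen.H b d hbd, Gen.H a e hae, Gen.H b f hbf, Gen.H a b hab, Gen.H a e hae, Gen.H b f hbf, Gen.H a c hac, Gen.H b d hbd, Gen.H a b hab, Gen.H a c hac, Gen.H b d hbd, Gen.X c e hce, Gen.X d f hdf] [Gen.H c e hce, Gen.H d f hdf, Gen.H e f hef, Gen.H c e hce, Gen.H d f hdf, Gen.X c e hce, Gen.X d f hdf] := s5a.symm.trans d4
  have t1 : WRel n [Gen.H a c hac, Gen.H b d hbd, Gen.H a b hab, Gen.H a c hac, Gen.H b d hbd, Gen.H a e hae, Gen.H b f hbf, Gen.H a b hab, Gen.H a e hae, Gen.H b f hbf, Gen.H a c hac, Gen.H b d hbd, Gen.H a b hab, Gen.H a c hac, Gen.H b d hbd, Gen.X c e hce, Gen.X d f hdf, Gen.X c e hce, Gen.X d f hdf] [Gen.H c e hce, Gen.H d f hdf, Gen.H e f hef, Gen.H c e hce, Gen.H d f hdf, Gen.X c e hce, Gen.X d f hdf, Gen.X c e hce, Gen.X d f hdf] := WRel.append_right [Gen.X c e hce, Gen.X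 d f hdf] S5
  have t2 : WRel n [Gen.H a c hac, Gen.H b d hbd, Gen.H a b hab, Gen.H a c hac, Gen.H b d hbd, Gen.H a e hae, Gen.H b f hbf, Gen.H a b hab, Gen.H a e hae, Gen.H b f hbf, Gen.H a c hac, Gen.H b d hbd, Gen.H a b hab, Gen.H a c hac, Gen.H b d hbd, Gen.X c e hce, Gen.X d f hdf, Gen.X c e hce, Gen.X d f hdf] [Gen.H a c hac, Gen.H b d hbd, Gen.H a b hab, Gen.H a c hac, Gen.H b d hbd, Gen.H a e hae, Gen.H b f hbf, Gen.H a b hab, Gen.H a e hae, Gen.H b f hbf, Gen.H a c hac, Gen.H b d hbd, Gen.H a b hab, Gen.H a c hac, Gen.H b d hbd] := wctx [Gen.H a c hac, Gen.H b d hbd, Gen.H a b hab, Gen.H a c hac, Gen.H b d hbd, Gen.H a e hae, Gen.H b f hbf, Gen.H a b hab, Gen.H a e hae, Gen.H b f hbf, Gen.H a c hac, Gen.H b d hbd, Gen.H a b hab, Gen.H a c hac, Gen.H b d hbd] [] S4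
  have t3 : WRel n [Gen.H c e hce, Gen.H d f hdf, Gen.H e f hef, Gen.H c e hce, Gen.H d f hdf, Gen.X c e hce, Gen.X d f hdf, Gen.X c e hce, Gen.X d f hdf] [Gen.H c e hce, Gen.H d f hdf, Gen.H e f hef, Gen.H c e hce, Gen.H d f hdf] := wctx [Gen.H c e hce, Gen.H d f hdf, Gen.H e f hef, Gen.H c e hce, Gen.H d f hdf] [] S4
  have S6 : WRel n [Gen.H a c hac, Gen.H b d hbd, Gen.H a b hab, Gen.H a c hac, Gen.H b d hbd, Gen.H a e hae, Gen.H b f hbf, Gen.H a b hab, Gen.H a e hae, Gen.H b f hbf, Gen.H a c hac, Gen.H b d hbd, Gen.H a b hab, Gen.H a c hac, Gen.H b d hbd] [Gen.H c e hce, Gen.H d f hdf, Gen.H e f hef, Gen.H c e hce, Gen.H d f hdf] := t2.symm.trans (t1.trans t3)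
  have m1 : WRel n [Gen.H c e hce, Gen.H d f hdf, Gen.H e f hef, Gen.H d f hdf, Gen.H c e hce, Gen.H a c hac, Gen.H b d hbd, Gen.H a b hab, Gen.H b d hbd, Gen.H a c hac, Gen.H a e hae, Gen.H b f hbf, Gen.H a b hab, Gen.H b f hbf, Gen.H a e hae] [Gen.H c e hce, Gen.H d f hdf, Gen.H e f hef, Gen.H c e hce, Gen.H d f hdf, Gen.H a c hac, Gen.H b d hbd, Gen.H a b hab, Gen.H b d hbd, Gen.H a c hac, Gen.H a e hae, Gen.H b f hbf, Gen.H a b hab, Gen.H b f hbf, Gen.H a e hae] := wctx [Gen.H c e hce, Gen.H d f hdf, Gen.H e f hef] [Gen.H a c hac, Gen.H b d hbd, Gen.H a b hab, Gen.H b d hbd, Gen.H a c hac, Gen.H a e hae, Gen.H b f hbf, Gen.H a b hab, Gen.H b f hbf, Gen.H a e hae] (WRel.rel_hh_comm d f c e hdf hcd.symm hde hcf.symm hef.symm hce)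
  have m2 : WRel n [Gen.H c e hce, Gen.H d f hdf, Gen.H e f hef, Gen.H c e hce, Gen.H d f hdf, Gen.H a c hac, Gen.H b d hbd, Gen.H a b hab, Gen.H b d hbd, Gen.H a c hac, Gen.H a e hae, Gen.H b f hbf, Gen.H a b hab, Gen.H b f hbf, Gen.H a e hae] [Gen.H c e hce, Gen.H d f hdf, Gen.H e f hef, Gen.H c e hce, Gen.H d f hdf, Gen.H a c hac, Gen.H b d hbd, Gen.H a b hab, Gen.H a c hac, Gen.H b d hbd, Gen.H a e hae, Gen.H b f hbf, Gen.H a b hab, Gen.H b f hbf, Gen.H a e hae] := wctx [Gen.H c e hce, Gen.H d f hdf, Gen.H e f hef, Gen.H c e hce, Gen.H d f hdf, Gen.H a c hac, Gen.H b d hbd, Gen.H a b hab] [Gen.H a e hae, Gen.H b f hbf, Gen.H a b hab, Gen.H b f hbf, Gen.H a e hae] (WRel.rel_hh_comm b d a c hbd hab.symm hbc had.symm hcd.symm hac)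
  have m3 : WRel n [Gen.H c e hce, Gen.H d f hdf, Gen.H e f hef, Gen.H c e hce, Gen.H d f hdf, Gen.H a c hac, Gen.H b d hbd, Gen.H a b hab, Gen.H a c hac, Gen.H b d hbd, Gen.H a e hae, Gen.H b f hbf, Gen.H a b hab, Gen.H b f hbf, Gen.H a e hae] [Gen.H c e hce, Gen.H d f hdf, Gen.H e f hef, Gen.H c e hce, Gen.H d f hdf, Gen.H a c hac, Gen.H b d hbd, Gen.H a b hab, Gen.H a c hac, Gen.H b d hbd, Gen.H a e hae, Gen.H b f hbf, Gen.H a b hab, Gen.H a e hae, Gen.H b f hbf] := wctx [Gen.H c e hce, Gen.H d f hdf, Gen.H e f hef, Gen.H c e hce, Gen.H d f hdf, Gen.H a c hac, Gen.H b d hbd, Gen.H a b hab, Gen.H a c hac, Gen.H b d hbd, Gen.H a e hae, Gen.H b f hbf, Gen.H a b hab] [] (WRel.rel_hh_comm b f a e hbf hab.symm hbe haf.symm hef.symm hae)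
  have m4 : WRel n [Gen.H c e hce, Gen.H d f hdf, Gen.H e f hef, Gen.H c e hce, Gen.H d f hdf, Gen.H a c hac, Gen.H b d hbd, Gen.H a b hab, Gen.H a c hac, Gen.H b d hbd, Gen.H a e hae, Gen.H b f hbf, Gen.H a b hab, Gen.H a e hae, Gen.H b f hbf] [Gen.H a c hac, Gen.H b d hbd, Gen.H a b hab, Gen.H a c hac, Gen.H b d hbd, Gen.H a e hae, Gen.H b f hbf, Gen.H a b hab, Gen.H a e hae, Gen.H b f hbf, Gen.H a c hac, Gen.H b d hbd, Gen.H a b hab, Gen.H a c hac, Gen.H b d hbd, Gen.H a c hac, Gen.H b d hbd, Gen.H a b hab, Gen.H a c hac, Gen.H b d hbd, Gen.H a e hae, Gen.H b f hbf, Gen.H a b hab, Gen.H a e hae, Gen.H b f hbf] := wctx [] [Gen.H a c hac, Gen.H b d hbd, Gen.H a b hab, Gen.H a c hac, Gen.H b d hbd, Gen.H a e hae, Gen.H b f hbf, Gen.H a b hab, Gen.H a e hae, Gen.H b f hbf] S6.symm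
  have m5 : WRel n [Gen.H a c hac, Gen.H b d hbd, Gen.H a b hab, Gen.H a c hac, Gen.H b d hbd, Gen.H a e hae, Gen.H b f hbf, Gen.H a b hab, Gen.H a e hae, Gen.H b f hbf, Gen.H a c hac, Gen.H b d hbd, Gen.H a b hab, Gen.H a c hac, Gen.H b d hbd, Gen.H a c hac, Gen.H b d hbd, Gen.H a b hab, Gen.H a c hac, Gen.H b d hbd, Gen.H a e hae, Gen.H b f hbf, Gen.H a b hab, Gen.H a e hae, Gen.H b f hbf] [Gen.H a c hac, Gen.H b d hbd, Gen.H a b hab, Gen.H a c hac, Gen.H b d hbd, Gen.H a e hae, Gen.H b f hbf, Gen.H a b hab, Gen.H a e hae, Gen.H b f hbf, Gen.H a e hae, Gen.H b f hbf, Gen.H a b hab, Gen.H a e hae, Gen.H b f hbf] := wctx [Gen.H a c hac, Gen.H b d hbd, Gen.H a b hab, Gen.H a c hac, Gen.H b d hbd, Gen.H a e hae, Gen.H b f hbf, Gen.H a b hab, Gen.H a e hae, Gen.H b f hbf] [Gen.H a e hae, Gen.H b f hbf, Gen.H a b hab, Gen.H a e hae, Gen.H b f hbf] S2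
  have m6 : WRel n [Gen.H a c hac, Gen.H b d hbd, Gen.H a b hab, Gen.H a c hac, Gen.H b d hbd, Gen.H a e hae, Gen.H b f hbf, Gen.H a b hab, Gen.H a e hae, Gen.H b f hbf, Gen.H a e hae, Gen.H b f hbf, Gen.H a b hab, Gen.H a e hae, Gen.H b f hbf] [Gen.H a c hac, Gen.H b d hbd, Gen.H a b hab, Gen.H a c hac, Gen.H b d hbd] := wctx [Gen.H a c hac, Gen.H b d hbd, Gen.H a b hab, Gen.H a c hac, Gen.H b d hbd] [] S3
  have m7 : WRel n [Gen.H a c hac, Gen.H b d hbd, Gen.H a b hab, Gen.H a c hac, Gen.H b d hbd] [Gen.H a c hac, Gen.H b d hbd, Gen.H a b hab, Gen.H b d hbd, Gen.H a c hac] := wctx [Gen.H a c hac, Gen.H b d hbd, Gen.H a b hab] [] (WRel.rel_hh_comm b d a c hbd hab.symm hbc had.symm hcd.symm hac).symm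
  exact m1.trans (m2.trans (m3.trans (m4.trans (m5.trans (m6.trans m7)))))
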